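/- If A is an n×n real matrix with spectral radius at most 1 that converges to a limit A^∞ = lim_{k→∞} A^k, then for any μ strictly between γ(A) and 1, A is linearly convergent with rate μ, i.e., there exist M, N > 0 with ‖A^k − A^∞‖ ≤ M·μ^k for all k > N; moreover if A is linearly convergent with rate μ ∈ [0,1), then μ ≥ γ(A). Here γ(A) is the maximum modulus of eigenvalues of A other than 1 (and 0 if there are none). -/

import Mathlib

attribute [local instance] Matrix.normedAddCommGroup

open Filter
open scoped ENNReal NNReal

private lemma exists_eigenvector_of_mem_spectrum {n : ℕ} {M : Matrix (Fin n) (Fin n) ℂ} {μ : ℂ}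
    (h : μ ∈ spectrum ℂ M) : ∃ v : Fin n → ℂ, v ≠ 0 ∧ M.mulVec v = μ • v := by
  rw [← AlgEquiv.spectrum_eq (Matrix.toLinAlgEquiv' (R := ℂ) (n := Fin n))] at h
  obtain ⟨v, hv⟩ := (Module.End.hasEigenvalue_iff_mem_spectrum.mpr h).exists_hasEigenvector
  exact ⟨v, hv.right, by simpa [Matrix.toLinAlgEquiv'_apply] using hv.apply_eq_smul⟩

private lemma mem_spectrum_of_eigenvector {n : ℕ} {M : Matrix (Fin n) (Fin n) ℂ} {μ : ℂ}
    {v : Fin n → ℂ} (hv : v ≠ 0) (h : M.mulVec v = μ • v) : μ ∈ spectrum ℂ M := by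
  rw [← AlgEquiv.spectrum_eq (Matrix.toLinAlgEquiv' (R := ℂ) (n := Fin n))]
  refine Module.End.hasEigenvalue_iff_mem_spectrum.mp ?_
  exact Module.End.hasEigenvalue_of_hasEigenvector
    ⟨Module.End.mem_eigenspace_iff.mpr (by simpa [Matrix.toLinAlgEquiv'_apply] using h), hv⟩

private lemma pow_entry_bound {n : ℕ} (B : Matrix (Fin n) (Fin n) ℂ) {γ μ : ℝ} (hγ0 : 0 ≤ γ)
    (hγμ : γ < μ) (hspec : ∀ z ∈ spectrum ℂ B, ‖z‖ ≤ γ) :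
    ∀ᶠ k in atTop, ∀ i j, ‖(B ^ k) i j‖ ≤ μ ^ k := by
  have hμ : 0 < μ := lt_of_le_of_lt hγ0 hγμ
  letI : SeminormedRing (Matrix (Fin n) (Fin n) ℂ) := Matrix.linftyOpSemiNormedRing
  letI : NormedRing (Matrix (Fin n) (Fin n) ℂ) := Matrix.linftyOpNormedRing
  letI : NormedAlgebra ℂ (Matrix (Fin n) (Fin n) ℂ) := Matrix.linftyOpNormedAlgebra
  letI : CompleteSpace (Matrix (Fin n) (Fin n) ℂ) :=
    FiniteDimensional.complete ℂ (Matrix (Fin n) (Fin n) ℂ)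
  have hrad : spectralRadius ℂ B < ENNReal.ofReal μ := by
    refine lt_of_le_of_lt (b := ENNReal.ofReal γ) ?_ ?_
    · refine iSup₂_le fun z hz => ?_
      rw [← ENNReal.ofReal_coe_nnreal]
      exact ENNReal.ofReal_le_ofReal (by simpa using hspec z hz)
    · exact (ENNReal.ofReal_lt_ofReal_iff hμ).mpr hγμ
  have hg :=
    @spectrum.pow_nnnorm_pow_one_div_tendsto_nhds_spectralRadius _ _ _ (FiniteDimensional.complete ℂ _) B
  have hev : ∀ᶠ k : ℕ in atTop, ((‖B ^ k‖₊ : ℝ≥0∞) ^ (1 / (k : ℝ))) < ENNReal.ofReal μ :=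
    hg.eventually_lt_const hrad
  filter_upwards [hev, eventually_ge_atTop 1] with k hk hk1 i j
  have hknz : (k : ℝ) ≠ 0 := Nat.cast_ne_zero.mpr (by omega)
  have hx : (‖B ^ k‖₊ : ℝ≥0∞) ≤ ENNReal.ofReal (μ ^ k) := by
    have h1 : ((‖B ^ k‖₊ : ℝ≥0∞) ^ (1 / (k : ℝ))) ^ (k : ℝ) ≤
        (ENNReal.ofReal μ) ^ (k : ℝ) := ENNReal.rpow_le_rpow hk.le (Nat.cast_nonneg k)
    rw [← ENNReal.rpow_mul, one_div_mul_cancel hknz, ENNReal.rpow_one] at h1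
    rwa [ENNReal.rpow_natCast, ← ENNReal.ofReal_pow hμ.le] at h1
  have hnorm : ‖B ^ k‖ ≤ μ ^ k := by
    have := (ENNReal.toReal_le_toReal (by simp) ENNReal.ofReal_ne_top).mpr hx
    simpa [ENNReal.toReal_ofReal (pow_nonneg hμ.le k)] using this
  refine le_trans ?_ hnorm
  have hentry : ‖(B ^ k) i j‖₊ ≤ ‖B ^ k‖₊ := by
    rw [Matrix.linfty_opNNNorm_def]
    refine le_trans ?_ (Finset.le_sup (Finset.mem_univ i))
    exact Finset.single_le_sum (f := fun j' => ‖(B ^ k) i j'‖₊) (fun _ _ => zero_le)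
      (Finset.mem_univ j)
  simpa using (NNReal.coe_le_coe.mpr hentry)

/-- Fact 2.12: a convergent matrix is linearly convergent with any rate strictly
between the subdominant eigenvalue modulus `γ(A)` and `1`, and no rate below `γ(A)`
is achievable. -/
theorem convergent_matrix_linear_rate {n : ℕ} (A Ainf : Matrix (Fin n) (Fin n) ℝ)
    (hρ : ∀ z ∈ spectrum ℂ (A.map (Complex.ofReal · : ℝ → ℂ)), ‖z‖ ≤ 1)
    (hconv : Tendsto (fun k => A ^ k) atTop (nhds Ainf)) :
    (∀ μ : ℝ,
      sSup (insert (0:ℝ)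
        ((fun z : ℂ => ‖z‖) '' (spectrum ℂ (A.map (Complex.ofReal · : ℝ → ℂ)) \ {1}))) < μ →
      μ < 1 →
      ∃ M N : ℝ, 0 < M ∧ 0 < N ∧ ∀ k : ℕ, N < (k : ℝ) → ‖A ^ k - Ainf‖ ≤ M * μ ^ k)
    ∧ (∀ μ : ℝ, 0 ≤ μ → μ < 1 →
      (∃ M N : ℝ, 0 < M ∧ 0 < N ∧ ∀ k : ℕ, N < (k : ℝ) → ‖A ^ k - Ainf‖ ≤ M * μ ^ k) →
      sSup (insert (0:ℝ)
        ((fun z : ℂ => ‖z‖) '' (spectrum ℂ (A.map (Complex.ofReal · : ℝ → ℂ)) \ {1}))) ≤ μ) := by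
  classical
  -- ring homomorphism of complexification
  set φ : Matrix (Fin n) (Fin n) ℝ →+* Matrix (Fin n) (Fin n) ℂ :=
    (Complex.ofRealHom : ℝ →+* ℂ).mapMatrix with hφdef
  have hφ : ∀ X : Matrix (Fin n) (Fin n) ℝ, X.map (Complex.ofReal · : ℝ → ℂ) = φ X :=
    fun _ => rfl
  -- algebraic facts
  have hAA : A * Ainf = Ainf := by
    have hc : Continuous (fun M : Matrix (Fin n) (Fin n) ℝ => A * M) :=
      continuous_const.matrix_mul continuous_id
    have h1 : Tendsto (fun k : ℕ => A * A ^ k) atTop (nhds (A * Ainf)) :=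
      (hc.tendsto Ainf).comp hconv
    have h2 : Tendsto (fun k : ℕ => A * A ^ k) atTop (nhds Ainf) := by
      have := hconv.comp (tendsto_add_atTop_nat 1)
      simpa [Function.comp_def, pow_succ'] using this
    exact tendsto_nhds_unique h1 h2
  have hAinfA : Ainf * A = Ainf := by
    have hc : Continuous (fun M : Matrix (Fin n) (Fin n) ℝ => M * A) :=
      continuous_id.matrix_mul continuous_const
    have h1 : Tendsto (fun k : ℕ => A ^ k * A) atTop (nhds (Ainf * A)) :=
      (hc.tendsto Ainf).comp hconv
    have h2 : Tendsto (fun k : ℕ => A ^ k * A) atTop (nhds Ainf) := by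
      have := hconv.comp (tendsto_add_atTop_nat 1)
      simpa [Function.comp_def, pow_succ] using this
    exact tendsto_nhds_unique h1 h2
  have hAkAinf : ∀ k : ℕ, A ^ k * Ainf = Ainf := by
    intro k; induction k with
    | zero => simp
    | succ k ih => rw [pow_succ, mul_assoc, hAA, ih]
  have hidem : Ainf * Ainf = Ainf := by
    have hc : Continuous (fun M : Matrix (Fin n) (Fin n) ℝ => M * Ainf) :=
      continuous_id.matrix_mul continuous_const
    have h1 : Tendsto (fun k : ℕ => A ^ k * Ainf) atTop (nhds (Ainf * Ainf)) :=
      (hc.tendsto Ainf).comp hconv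
    have h2 : Tendsto (fun k : ℕ => A ^ k * Ainf) atTop (nhds Ainf) := by
      simpa [hAkAinf] using (tendsto_const_nhds : Tendsto (fun _ : ℕ => Ainf) atTop (nhds Ainf))
    exact tendsto_nhds_unique h1 h2
  have hBpow : ∀ k : ℕ, (A - Ainf) ^ (k + 1) = A ^ (k + 1) - Ainf := by
    intro k; induction k with
    | zero => simp
    | succ k ih =>
      rw [pow_succ, ih, sub_mul, mul_sub, mul_sub, hAkAinf, hAinfA, hidem, ← pow_succ]
      abel
  -- convergence of complexified powers applied to a vector
  have hconvC : Tendsto (fun k : ℕ => φ (A ^ k)) atTop (nhds (φ Ainf)) := by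
    have hc : Continuous (fun M : Matrix (Fin n) (Fin n) ℝ => M.map (Complex.ofReal ·)) :=
      continuous_id.matrix_map Complex.continuous_ofReal
    exact (hc.tendsto Ainf).comp hconv
  have hvecC : ∀ v : Fin n → ℂ,
      Tendsto (fun k : ℕ => (φ A ^ k).mulVec v) atTop (nhds ((φ Ainf).mulVec v)) := by
    intro v
    have hc : Continuous (fun M : Matrix (Fin n) (Fin n) ℂ => M.mulVec v) :=
      continuous_id.matrix_mulVec continuous_const
    have := (hc.tendsto (φ Ainf)).comp hconvC
    simpa [Function.comp_def, map_pow] using this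
  -- spectrum inclusion
  have hsub : spectrum ℂ (φ (A - Ainf)) ⊆
      insert (0 : ℂ) (spectrum ℂ (φ A) \ {1}) := by
    intro z hz
    by_cases hz0 : z = 0
    · exact hz0 ▸ Set.mem_insert _ _
    obtain ⟨v, hv, hBv⟩ := exists_eigenvector_of_mem_spectrum hz
    have h0 : φ Ainf * φ (A - Ainf) = 0 := by
      rw [← map_mul, mul_sub, hAinfA, hidem, sub_self, map_zero]
    have hAiv : (φ Ainf).mulVec v = 0 := by
      have : (φ Ainf).mulVec ((φ (A - Ainf)).mulVec v) = 0 := by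
        rw [Matrix.mulVec_mulVec, h0, Matrix.zero_mulVec]
      rw [hBv, Matrix.mulVec_smul] at this
      exact (smul_eq_zero.mp this).resolve_left hz0
    have hAv : (φ A).mulVec v = z • v := by
      have hsplit : φ A = φ (A - Ainf) + φ Ainf := by rw [← map_add, sub_add_cancel]
      rw [hsplit, Matrix.add_mulVec, hBv, hAiv, add_zero]
    have hz1 : z ≠ 1 := by
      intro h1
      have hk : ∀ k : ℕ, (φ A ^ k).mulVec v = v := by
        intro k; induction k with
        | zero => simp [Matrix.one_mulVec]
        | succ k ih =>
          rw [pow_succ', ← Matrix.mulVec_mulVec, ih, hAv, h1, one_smul]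
      have h2 : Tendsto (fun _ : ℕ => v) atTop (nhds ((φ Ainf).mulVec v)) := by
        simpa [hk] using hvecC v
      have h3 : v = (φ Ainf).mulVec v := tendsto_nhds_unique tendsto_const_nhds h2
      exact hv (by rw [h3, hAiv])
    exact Set.mem_insert_of_mem _ ⟨mem_spectrum_of_eigenvector hv hAv, hz1⟩
  -- the set S and its properties
  set S : Set ℝ := insert (0:ℝ)
      ((fun z : ℂ => ‖z‖) '' (spectrum ℂ (A.map (Complex.ofReal · : ℝ → ℂ)) \ {1})) with hSdef
  have hSfin : S.Finite :=
    (((Matrix.finite_spectrum (A.map (Complex.ofReal · : ℝ → ℂ))).diff).image _).insert _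
  have hbdd : BddAbove S := hSfin.bddAbove
  have hγ0 : 0 ≤ sSup S := le_csSup hbdd (Set.mem_insert _ _)
  constructor
  · -- part 1
    intro μ hγμ hμ1
    have hspecB : ∀ z ∈ spectrum ℂ (φ (A - Ainf)), ‖z‖ ≤ sSup S := by
      intro z hz
      rcases hsub hz with h | h
      · rw [h]; simpa using hγ0
      · exact le_csSup hbdd (Set.mem_insert_of_mem _ ⟨z, by rwa [hφ], rfl⟩)
    have hev := pow_entry_bound (φ (A - Ainf)) hγ0 hγμ hspecB
    obtain ⟨K, hK⟩ := eventually_atTop.mp hev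
    refine ⟨1, (K : ℝ) + 1, one_pos, by positivity, fun k hk => ?_⟩
    have hkK : K + 1 ≤ k := by exact_mod_cast (by push_cast; linarith : ((K + 1 : ℕ) : ℝ) ≤ k)
    have hk1 : 1 ≤ k := le_trans (Nat.le_add_left 1 K) hkK
    have hμ0 : 0 < μ := lt_of_le_of_lt hγ0 hγμ
    have hent := hK k (le_trans (Nat.le_add_right K 1) hkK)
    have heq : A ^ k - Ainf = (A - Ainf) ^ k := by
      obtain ⟨m, rfl⟩ := Nat.exists_eq_add_of_le hk1
      rw [add_comm 1 m, hBpow m]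
    rw [heq, one_mul]
    rw [Matrix.norm_le_iff (pow_nonneg hμ0.le k)]
    intro i j
    have : ((φ (A - Ainf)) ^ k) i j = Complex.ofReal (((A - Ainf) ^ k) i j) := by
      rw [← map_pow]; rfl
    have h2 := hent i j
    rw [this, Complex.norm_real] at h2
    simpa using h2
  · -- part 2
    intro μ hμ0 hμ1 ⟨M, N, hM, hN, hbound⟩
    refine Real.sSup_le ?_ hμ0
    rintro x (hx | ⟨z, hz, rfl⟩)
    · exact hx ▸ hμ0
    rw [hφ] at hz
    obtain ⟨v, hv, hAv⟩ := exists_eigenvector_of_mem_spectrum hz.1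
    have hz1 : z ≠ 1 := hz.2
    have hpow : ∀ k : ℕ, (φ A ^ k).mulVec v = z ^ k • v := by
      intro k; induction k with
      | zero => simp [Matrix.one_mulVec]
      | succ k ih =>
        rw [pow_succ', ← Matrix.mulVec_mulVec, ih, Matrix.mulVec_smul, hAv,
          smul_smul, ← pow_succ]
    obtain ⟨i, hvi⟩ := Function.ne_iff.mp hv
    have t2 : Tendsto (fun k : ℕ => z ^ k • v) atTop (nhds ((φ Ainf).mulVec v)) := by
      simpa [hpow] using hvecC v
    have t3 : Tendsto (fun k : ℕ => z ^ k * v i) atTop (nhds (((φ Ainf).mulVec v) i)) := by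
      have := ((continuous_apply i).tendsto ((φ Ainf).mulVec v)).comp t2
      simpa [Function.comp_def] using this
    set c : ℂ := ((φ Ainf).mulVec v) i * (v i)⁻¹ with hcdef
    have t4 : Tendsto (fun k : ℕ => z ^ k) atTop (nhds c) := by
      have := t3.mul_const (v i)⁻¹
      simpa [mul_assoc, mul_inv_cancel₀ hvi] using this
    have hzc : z * c = c := by
      have t5 : Tendsto (fun k : ℕ => z ^ (k + 1)) atTop (nhds c) :=
        t4.comp (tendsto_add_atTop_nat 1)
      have t6 : Tendsto (fun k : ℕ => z ^ (k + 1)) atTop (nhds (z * c)) := by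
        have := t4.const_mul z
        simpa [pow_succ'] using this
      exact tendsto_nhds_unique t6 t5
    have hc0 : c = 0 := by
      have h8 : (z - 1) * c = 0 := by rw [sub_mul, one_mul, hzc, sub_self]
      rcases mul_eq_zero.mp h8 with h | h
      · exact (hz1 (by rwa [sub_eq_zero] at h)).elim
      · exact h
    have hAiv : (φ Ainf).mulVec v = 0 := by
      have t7 : Tendsto (fun k : ℕ => z ^ k • v) atTop (nhds (c • v)) := t4.smul_const v
      have h9 := tendsto_nhds_unique t2 t7
      rw [h9, hc0, zero_smul]
    -- quantitative bound
    set T : ℝ := ∑ j, ‖v j‖ with hTdef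
    have hvi0 : 0 < ‖v i‖ := by
      simpa [AbsoluteValue.pos_iff] using hvi
    have hentryφ : ∀ (X : Matrix (Fin n) (Fin n) ℝ) (i j : Fin n),
        φ X i j = Complex.ofReal (X i j) := fun _ _ _ => rfl
    have key : ∀ k : ℕ, N < (k : ℝ) →
        ‖z‖ ^ k * ‖v i‖ ≤ M * μ ^ k * T := by
      intro k hk
      have heq : z ^ k • v = (φ (A ^ k - Ainf)).mulVec v := by
        rw [map_sub, Matrix.sub_mulVec, map_pow, hpow, hAiv, sub_zero]
      have hcomp : z ^ k * v i = ∑ j, (φ (A ^ k - Ainf)) i j * v j := by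
        have h10 := congrFun heq i
        simpa [Matrix.mulVec, dotProduct] using h10
      calc ‖z‖ ^ k * ‖v i‖
          = ‖z ^ k * v i‖ := by rw [norm_mul, norm_pow]
        _ ≤ ∑ j, ‖(φ (A ^ k - Ainf)) i j * v j‖ := by
            rw [hcomp]; exact norm_sum_le _ _
        _ ≤ ∑ j, (M * μ ^ k) * ‖v j‖ := by
            refine Finset.sum_le_sum fun j _ => ?_
            rw [norm_mul]
            refine mul_le_mul_of_nonneg_right ?_ (norm_nonneg _)
            rw [hentryφ, Complex.norm_real]
            exact le_trans (Matrix.norm_entry_le_entrywise_sup_norm (A ^ k - Ainf))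
              (hbound k hk)
        _ = M * μ ^ k * T := by rw [← Finset.mul_sum]
    by_contra hlt
    rw [not_le] at hlt
    rcases eq_or_lt_of_le hμ0 with hμz | hμpos
    · set k : ℕ := ⌈N⌉₊ + 1 with hkdef
      have hkN : N < (k : ℝ) := by
        refine lt_of_le_of_lt (Nat.le_ceil N) ?_
        exact_mod_cast Nat.lt_succ_self _
      have h11 := key k hkN
      rw [← hμz, zero_pow (by omega : k ≠ 0)] at h11
      have hz0 : 0 < ‖z‖ := lt_of_le_of_lt hμ0 hlt
      nlinarith [pow_pos hz0 k, hvi0]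
    · have hr : 1 < ‖z‖ / μ := (one_lt_div hμpos).mpr hlt
      have hbig := (tendsto_pow_atTop_atTop_of_one_lt hr).eventually_gt_atTop
        (M * T / ‖v i‖)
      obtain ⟨k, hk1, hk2⟩ := (hbig.and (eventually_gt_atTop ⌈N⌉₊)).exists
      have hkN : N < (k : ℝ) :=
        lt_of_le_of_lt (Nat.le_ceil N) (by exact_mod_cast hk2)
      have hkey := key k hkN
      have h12 : (‖z‖ / μ) ^ k ≤ M * T / ‖v i‖ := by
        rw [div_pow, div_le_div_iff₀ (pow_pos hμpos k) hvi0]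
        calc ‖z‖ ^ k * ‖v i‖ ≤ M * μ ^ k * T := hkey
          _ = M * T * μ ^ k := by ring
      exact absurd h12 (not_le.mpr hk1)
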